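/- arXiv:2211.01062 — 6 statements merged into one kernel-verified Lean document; each statement's English description precedes it below -/
import Mathlib

section
/- Let F be a field, n = k + l + 2 for naturals k, l, let a_1, ..., a_n be distinct elements of F, and let g, h ∈ F[t] be polynomials with deg g ≤ k, deg h ≤ l, and h(a_i) ≠ 0 for all i. Then the determinant of the n×n matrix whose i-th row is (a_i^l·c_i, a_i^{l-1}·c_i, ..., c_i, a_i^k, a_i^{k-1}, ..., 1), where c_i = g(a_i)/h(a_i), equals 0. -/
theorem stmt_2 (F : Type*) [Field F] (k l : ℕ) (a : Fin (k + l + 2) → F)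
    (ha : Function.Injective a) (g h : Polynomial F)
    (hg : g.natDegree ≤ k) (hh : h.natDegree ≤ l)
    (hne : ∀ i, h.eval (a i) ≠ 0) :
    (Matrix.of fun i j : Fin (k + l + 2) =>
        if (j : ℕ) ≤ l then a i ^ (l - (j : ℕ)) * (g.eval (a i) / h.eval (a i))
        else a i ^ (k + l + 1 - (j : ℕ))).det = 0 := by
  rw [← Matrix.exists_mulVec_eq_zero_iff]
  refine ⟨fun j => if (j : ℕ) ≤ l then h.coeff (l - (j : ℕ))
      else -(g.coeff (k + l + 1 - (j : ℕ))), ?_, ?_⟩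
  · have hh0 : h ≠ 0 := fun h0 => hne 0 (by simp [h0])
    have hlc : h.coeff h.natDegree ≠ 0 := Polynomial.leadingCoeff_ne_zero.mpr hh0
    intro hv
    have := congrFun hv ⟨l - h.natDegree, by omega⟩
    simp only [Fin.val_mk] at this
    rw [if_pos (by omega)] at this
    have hd : l - (l - h.natDegree) = h.natDegree := by omega
    rw [hd] at this
    exact hlc this
  · funext i
    set x := a i with hx
    have hH : h.eval x ≠ 0 := hne i
    have key : ∀ (p : Polynomial F) (d : ℕ), p.natDegree ≤ d →
        ∑ j ∈ Finset.range (d + 1), p.coeff (d - j) * x ^ (d - j) = p.eval x := by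
      intro p d hd
      have hr := Finset.sum_range_reflect (fun m => p.coeff m * x ^ m) (d + 1)
      simp only [Nat.add_sub_cancel] at hr
      rw [hr]
      exact (Polynomial.eval_eq_sum_range' (by omega) x).symm
    show (∑ j : Fin (k + l + 2), _) = 0
    have hterm : ∀ j : Fin (k + l + 2),
        (if (j : ℕ) ≤ l then x ^ (l - (j : ℕ)) * (g.eval x / h.eval x)
          else x ^ (k + l + 1 - (j : ℕ))) *
        (if (j : ℕ) ≤ l then h.coeff (l - (j : ℕ))
          else -(g.coeff (k + l + 1 - (j : ℕ)))) =
        if (j : ℕ) ≤ l then h.coeff (l - (j : ℕ)) * x ^ (l - (j : ℕ)) * (g.eval x / h.eval x)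
          else -(g.coeff (k + l + 1 - (j : ℕ)) * x ^ (k + l + 1 - (j : ℕ))) := by
      intro j; split_ifs <;> ring
    simp only [Matrix.mulVec, dotProduct, Matrix.of_apply, ← hx, hterm]
    rw [Fin.sum_univ_eq_sum_range
      (fun j => if j ≤ l then h.coeff (l - j) * x ^ (l - j) * (g.eval x / h.eval x)
        else -(g.coeff (k + l + 1 - j) * x ^ (k + l + 1 - j)))]
    rw [show k + l + 2 = (l + 1) + (k + 1) by ring, Finset.sum_range_add]
    have h1 : ∑ j ∈ Finset.range (l + 1),
        (if j ≤ l then h.coeff (l - j) * x ^ (l - j) * (g.eval x / h.eval x)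
          else -(g.coeff (k + l + 1 - j) * x ^ (k + l + 1 - j))) = g.eval x := by
      rw [Finset.sum_congr rfl (fun j hj => if_pos (by
        simp only [Finset.mem_range] at hj; omega))]
      rw [← Finset.sum_mul, key h l hh]
      field_simp
    have h2 : ∑ j ∈ Finset.range (k + 1),
        (if (l + 1) + j ≤ l then h.coeff (l - ((l + 1) + j)) * x ^ (l - ((l + 1) + j)) * (g.eval x / h.eval x)
          else -(g.coeff (k + l + 1 - ((l + 1) + j)) * x ^ (k + l + 1 - ((l + 1) + j)))) = -(g.eval x) := by
      rw [Finset.sum_congr rfl (fun j hj => if_neg (by omega))]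
      have : ∀ j, k + l + 1 - ((l + 1) + j) = k - j := by omega
      simp only [this, Finset.sum_neg_distrib]
      rw [key g k hg]
    rw [h1, h2]; ring
end

section
/- Let F be a field, a_1, ..., a_n distinct elements of F, and let p ∈ F[x_1,...,x_n]. Then p vanishes under the substitution x_i ← z·∏_{j≠i}(y - a_j) (as a polynomial identity in F[y,z]) if and only if p vanishes under the substitution x_i ← z'/(y - a_i) (as an identity in the field of rational functions F(y, z')). -/
open MvPolynomial

namespace SV13aux

variable (F : Type*) [Field F] (n : ℕ) (a : Fin n → F)

local notation "R2" => MvPolynomial (Fin 2) F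
local notation "K2" => FractionRing (MvPolynomial (Fin 2) F)
local notation "em" => algebraMap (MvPolynomial (Fin 2) F) (FractionRing (MvPolynomial (Fin 2) F))

lemma X_sub_C_ne (c : F) : (X 0 - C c : R2) ≠ 0 := by
  intro h
  have := congrArg (eval (fun i : Fin 2 => if i = 0 then c + 1 else 0)) h
  simp at this

noncomputable def q : MvPolynomial (Fin 2) F := ∏ j, (X 0 - C (a j))

lemma q_ne : q F n a ≠ 0 :=
  Finset.prod_ne_zero_iff.mpr fun j _ => X_sub_C_ne F (a j)

noncomputable def τ : MvPolynomial (Fin 2) F →ₐ[F] MvPolynomial (Fin 2) F :=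
  aeval ![X 0, X 1 * q F n a]

lemma τ_X0 : τ F n a (X 0) = X 0 := by simp [τ]

lemma τ_X1 : τ F n a (X 1) = X 1 * q F n a := by simp [τ]

lemma τ_C (c : F) : τ F n a (C c) = C c := by simp [τ, algebraMap_eq]

noncomputable def hmap :
    MvPolynomial (Fin 2) F →ₐ[F] FractionRing (MvPolynomial (Fin 2) F) :=
  aeval ![em (X 0), em (X 1) / em (q F n a)]

lemma emb_C (c : F) : em (C c) = algebraMap F K2 c := by
  rw [IsScalarTower.algebraMap_apply F R2 K2, algebraMap_eq]

lemma embq_ne : em (q F n a) ≠ 0 := by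
  intro h
  exact q_ne F n a (IsFractionRing.injective R2 K2 (by simpa using h))

lemma embXC_ne (c : F) : em ((X 0 : R2) - C c) ≠ 0 := by
  intro h
  exact X_sub_C_ne F c (IsFractionRing.injective R2 K2 (by simpa using h))

lemma hmap_q : hmap F n a (q F n a) = em (q F n a) := by
  rw [q, map_prod, map_prod]
  refine Finset.prod_congr rfl fun j _ => ?_
  rw [map_sub, map_sub, emb_C]
  simp [hmap]

lemma hmap_comp_τ :
    (hmap F n a).comp (τ F n a) = IsScalarTower.toAlgHom F R2 K2 := by
  apply MvPolynomial.algHom_ext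
  intro i
  fin_cases i
  · simp [τ, hmap]
  · rw [AlgHom.comp_apply]
    show hmap F n a (τ F n a (X 1)) = em (X 1)
    rw [τ_X1, map_mul, hmap_q]
    have : hmap F n a (X 1) = em (X 1) / em (q F n a) := by simp [hmap]
    rw [this, div_mul_cancel₀ _ (embq_ne F n a)]

lemma g_inj :
    Function.Injective
      ((algebraMap (MvPolynomial (Fin 2) F)
        (FractionRing (MvPolynomial (Fin 2) F))).comp (τ F n a).toRingHom) := by
  intro x y hxy
  have hτ : τ F n a x = τ F n a y :=
    IsFractionRing.injective R2 K2 (by simpa using hxy)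
  have hx := DFunLike.congr_fun (hmap_comp_τ F n a) x
  have hy := DFunLike.congr_fun (hmap_comp_τ F n a) y
  simp only [AlgHom.comp_apply] at hx hy
  apply IsFractionRing.injective R2 K2
  calc em x = hmap F n a (τ F n a x) := by rw [hx]; rfl
    _ = hmap F n a (τ F n a y) := by rw [hτ]
    _ = em y := by rw [hy]; rfl

noncomputable def σ :
    FractionRing (MvPolynomial (Fin 2) F) →+* FractionRing (MvPolynomial (Fin 2) F) :=
  IsFractionRing.lift (g_inj F n a)

lemma σ_emb (r : MvPolynomial (Fin 2) F) : σ F n a (em r) = em (τ F n a r) := by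
  simpa [σ] using IsFractionRing.lift_algebraMap (g_inj F n a) r

lemma σ_C (c : F) : σ F n a (algebraMap F K2 c) = algebraMap F K2 c := by
  rw [← emb_C, σ_emb, τ_C]

lemma σ_key (i : Fin n) :
    σ F n a (em (X 1) / em ((X 0 : R2) - C (a i)))
      = em ((X 1 : R2) * ∏ j ∈ Finset.univ.erase i, (X 0 - C (a j))) := by
  rw [map_div₀, σ_emb, σ_emb, τ_X1]
  have hτ0 : τ F n a ((X 0 : R2) - C (a i)) = X 0 - C (a i) := by
    rw [map_sub, τ_X0, τ_C]
  rw [hτ0, div_eq_iff (embXC_ne F (a i)), ← map_mul]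
  congr 1
  rw [q, ← Finset.mul_prod_erase Finset.univ _ (Finset.mem_univ i)]
  ring

lemma σ_main (p : MvPolynomial (Fin n) F) :
    σ F n a (aeval (R := F) (fun i : Fin n =>
        em (X 1) / em ((X 0 : R2) - C (a i))) p)
      = em (aeval (R := F) (fun i : Fin n =>
            ((X 1 : R2) * ∏ j ∈ Finset.univ.erase i, (X 0 - C (a j)))) p) := by
  rw [map_aeval, map_aeval]
  apply eval₂Hom_congr _ _ rfl
  · ext c
    simp only [RingHom.coe_comp, Function.comp_apply]
    rw [σ_C, IsScalarTower.algebraMap_apply F R2 K2]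
  · funext i
    exact σ_key F n a i

end SV13aux

set_option maxHeartbeats 1000000 in
theorem stmt_13 (F : Type*) [Field F] (n : ℕ) (a : Fin n → F)
    (ha : Function.Injective a) (p : MvPolynomial (Fin n) F) :
    (aeval (R := F) (fun i : Fin n =>
        (X 1 * ∏ j ∈ Finset.univ.erase i, (X 0 - C (a j)) :
          MvPolynomial (Fin 2) F)) p = 0) ↔
    (aeval (R := F) (fun i : Fin n =>
        algebraMap (MvPolynomial (Fin 2) F)
            (FractionRing (MvPolynomial (Fin 2) F)) (X 1) /
          algebraMap (MvPolynomial (Fin 2) F)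
            (FractionRing (MvPolynomial (Fin 2) F)) (X 0 - C (a i))) p = 0) := by
  constructor
  · intro h
    have h2 := SV13aux.σ_main F n a p
    rw [h, map_zero] at h2
    exact (SV13aux.σ F n a).injective (h2.trans (map_zero _).symm)
  · intro h
    have h2 := SV13aux.σ_main F n a p
    rw [h, map_zero] at h2
    apply IsFractionRing.injective (MvPolynomial (Fin 2) F)
      (FractionRing (MvPolynomial (Fin 2) F))
    rw [← h2, map_zero]
end

section
/- Let F be a field of size greater than 2, a_1, a_2, a_3 distinct elements of F, and let p ∈ F[x_1,x_2,x_3] be a nonzero homogeneous multilinear polynomial of degree 2 such that p(z/(y-a_1), z/(y-a_2), z/(y-a_3)) = 0 as an identity in F(y,z). If F is infinite, then p is a nonzero scalar multiple of EVC_{0,1}[1,2,3] = (a_1-a_2)x_1x_2 + (a_2-a_3)x_2x_3 + (a_3-a_1)x_3x_1. -/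
open MvPolynomial

theorem stmt_14 (F : Type*) [Field F] [Infinite F] (a : Fin 3 → F)
    (ha : Function.Injective a) (p : MvPolynomial (Fin 3) F) (hp : p ≠ 0)
    (hhom : p.IsHomogeneous 2) (hml : ∀ i, p.degreeOf i ≤ 1)
    (hvan : ∀ y z : F, (∀ i, y ≠ a i) → eval (fun i => z / (y - a i)) p = 0) :
    ∃ c : F, c ≠ 0 ∧
      p = C c * (C (a 0 - a 1) * (X 0 * X 1) + C (a 1 - a 2) * (X 1 * X 2)
        + C (a 2 - a 0) * (X 2 * X 0)) := by
  classical
  -- distinctness of the a's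
  have ha01 : a 0 ≠ a 1 := fun h => by exact absurd (ha h) (by decide)
  have ha12 : a 1 ≠ a 2 := fun h => by exact absurd (ha h) (by decide)
  have ha02 : a 0 ≠ a 2 := fun h => by exact absurd (ha h) (by decide)
  set m01 : Fin 3 →₀ ℕ := Finsupp.single 0 1 + Finsupp.single 1 1 with hm01
  set m12 : Fin 3 →₀ ℕ := Finsupp.single 1 1 + Finsupp.single 2 1 with hm12
  set m02 : Fin 3 →₀ ℕ := Finsupp.single 0 1 + Finsupp.single 2 1 with hm02
  set b01 := coeff m01 p with hb01def
  set b12 := coeff m12 p with hb12def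
  set b02 := coeff m02 p with hb02def
  have hCX : ∀ (b : F) (i j : Fin 3),
      C b * (X i * X j) = monomial (Finsupp.single i 1 + Finsupp.single j 1) b := by
    intro b i j
    rw [X, X, monomial_mul, C_mul_monomial, one_mul, mul_one]
  have pform : p = C b01 * (X 0 * X 1) + C b12 * (X 1 * X 2) + C b02 * (X 2 * X 0) := by
    ext m
    rw [coeff_add, coeff_add, hCX, hCX, hCX, coeff_monomial, coeff_monomial, coeff_monomial]
    have h20 : Finsupp.single (2 : Fin 3) 1 + Finsupp.single 0 1 = m02 := by
      rw [hm02, add_comm]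
    rw [h20, ← hm01, ← hm12]
    by_cases h1 : m01 = m
    · subst h1
      have e1 : ¬ m12 = m01 := by
        intro h; have := DFunLike.congr_fun h 0; simp [hm01, hm12] at this
      have e2 : ¬ m02 = m01 := by
        intro h; have := DFunLike.congr_fun h 1; simp [hm01, hm02] at this
      simp [e1, e2, hb01def]
    by_cases h2 : m12 = m
    · subst h2
      have e2 : ¬ m02 = m12 := by
        intro h; have := DFunLike.congr_fun h 0; simp [hm12, hm02] at this
      simp [h1, e2, hb12def]
    by_cases h3 : m02 = m
    · subst h3
      simp [h1, h2, hb02def]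
    · simp only [h1, h2, h3, if_neg, not_false_iff, add_zero]
      by_contra hne
      have hdeg : (Finsupp.weight 1) m = 2 := hhom hne
      have hsum : m 0 + m 1 + m 2 = 2 := by
        have : ∑ i : Fin 3, m i = 2 := by
          rw [← hdeg, Finsupp.weight_apply, Finsupp.sum]
          rw [Finset.sum_subset (Finset.subset_univ m.support)]
          · simp [Fin.sum_univ_three]
          · intro i _ hi
            simp [Finsupp.notMem_support_iff.mp hi]
        simpa [Fin.sum_univ_three] using this
      have hle : ∀ i, m i ≤ 1 := fun i =>
        le_trans (monomial_le_degreeOf i (mem_support_iff.mpr hne)) (hml i)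
      have h0 := hle 0; have h1' := hle 1; have h2' := hle 2
      -- m is one of the three
      have : m = m01 ∨ m = m12 ∨ m = m02 := by
        have hc : (m 0 = 1 ∧ m 1 = 1 ∧ m 2 = 0) ∨ (m 0 = 0 ∧ m 1 = 1 ∧ m 2 = 1)
            ∨ (m 0 = 1 ∧ m 1 = 0 ∧ m 2 = 1) := by omega
        rcases hc with ⟨x0, x1, x2⟩ | ⟨x0, x1, x2⟩ | ⟨x0, x1, x2⟩
        · left; ext i; fin_cases i <;> simp [hm01, x0, x1, x2, Finsupp.single_apply]
        · right; left; ext i; fin_cases i <;> simp [hm12, x0, x1, x2, Finsupp.single_apply]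
        · right; right; ext i; fin_cases i <;> simp [hm02, x0, x1, x2, Finsupp.single_apply]
      rcases this with h | h | h
      · exact h1 h.symm
      · exact h2 h.symm
      · exact h3 h.symm
  -- key evaluation identity
  have key : ∀ y : F, (∀ i, y ≠ a i) →
      b01 * (y - a 2) + b12 * (y - a 0) + b02 * (y - a 1) = 0 := by
    intro y hy
    have h := hvan y 1 hy
    rw [pform] at h
    simp only [eval_add, eval_mul, eval_C, eval_X] at h
    have d0 : y - a 0 ≠ 0 := sub_ne_zero.mpr (hy 0)
    have d1 : y - a 1 ≠ 0 := sub_ne_zero.mpr (hy 1)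
    have d2 : y - a 2 ≠ 0 := sub_ne_zero.mpr (hy 2)
    field_simp at h
    have hprod : (y - a 0) * ((y - a 1) * (y - a 2)) ≠ 0 := by
      exact mul_ne_zero d0 (mul_ne_zero d1 d2)
    apply mul_left_cancel₀ hprod
    rw [mul_zero]
    linear_combination (y - a 0) * ((y - a 1) * (y - a 2)) * h
  -- pick two generic points
  obtain ⟨y1, hy1⟩ := Infinite.exists_notMem_finset ({a 0, a 1, a 2} : Finset F)
  obtain ⟨y2, hy2⟩ := Infinite.exists_notMem_finset (insert y1 ({a 0, a 1, a 2} : Finset F))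
  simp only [Finset.mem_insert, Finset.mem_singleton, not_or] at hy1 hy2
  obtain ⟨h1a, h1b, h1c⟩ := hy1
  obtain ⟨h1d, h2a, h2b, h2c⟩ := hy2
  have hk1 := key y1 (fun i => by fin_cases i <;> assumption)
  have hk2 := key y2 (fun i => by fin_cases i <;> assumption)
  have hne12 : y1 ≠ y2 := fun h => h1d h.symm
  have hs : b01 + b12 + b02 = 0 := by
    have h : (b01 + b12 + b02) * (y1 - y2) = 0 := by linear_combination hk1 - hk2
    rcases mul_eq_zero.mp h with h' | h'
    · exact h'
    · exact absurd (sub_eq_zero.mp h') hne12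
  have ht : b01 * a 2 + b12 * a 0 + b02 * a 1 = 0 := by
    linear_combination y1 * hs - hk1
  have hb2 : b12 * (a 0 - a 2) + b02 * (a 1 - a 2) = 0 := by
    linear_combination ht - a 2 * hs
  have ha12' : a 1 - a 2 ≠ 0 := sub_ne_zero.mpr ha12
  have hb12ne : b12 ≠ 0 := by
    intro h
    have hb02 : b02 = 0 := by
      have h2 : b02 * (a 1 - a 2) = 0 := by linear_combination hb2 - (a 0 - a 2) * h
      rcases mul_eq_zero.mp h2 with h' | h'
      · exact h'
      · exact absurd (sub_eq_zero.mp h') ha12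
    have hb01 : b01 = 0 := by linear_combination hs - h - hb02
    apply hp
    rw [pform, hb01, hb02, h]
    simp
  refine ⟨b12 / (a 1 - a 2), div_ne_zero hb12ne ha12', ?_⟩
  set c := b12 / (a 1 - a 2) with hc
  have e12 : b12 = c * (a 1 - a 2) := (div_mul_cancel₀ b12 ha12').symm
  have e02 : b02 = c * (a 2 - a 0) := by
    apply mul_right_cancel₀ ha12'
    rw [hc]
    field_simp
    linear_combination hb2
  have e01 : b01 = c * (a 0 - a 1) := by
    linear_combination hs - e12 - e02
  rw [pform, e01, e12, e02]
  simp only [map_mul]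
  ring
end

section
/- Let F be an infinite field, a_1, a_2, a_3 distinct elements of F, and let p ∈ F[x_1,x_2,x_3] be a nonzero polynomial in the vanishing ideal of RFE_{0,1}, i.e., p(z/(y-a_1), z/(y-a_2), z/(y-a_3)) = 0 identically in F(y,z). Then p has at least 3 monomials (nonzero coefficients). -/
open MvPolynomial

private lemma evalMon {F : Type*} [Field F] (f : Fin 3 → F) (m : Fin 3 →₀ ℕ) (c : F) :
    eval f (monomial m c) = c * ∏ i, f i ^ m i := by
  rw [eval_monomial, Finsupp.prod_fintype]
  intro i; exact pow_zero _

theorem stmt_15 (F : Type*) [Field F] [Infinite F] (a : Fin 3 → F)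
    (ha : Function.Injective a) (p : MvPolynomial (Fin 3) F) (hp : p ≠ 0)
    (hvan : ∀ y z : F, (∀ i, y ≠ a i) → eval (fun i => z / (y - a i)) p = 0) :
    3 ≤ p.support.card := by
  classical
  by_contra hlt
  push_neg at hlt
  obtain ⟨y0, hy0⟩ := Infinite.exists_notMem_finset (Finset.image a Finset.univ)
  have hy0' : ∀ i, y0 ≠ a i := fun i h =>
    hy0 (Finset.mem_image.mpr ⟨i, Finset.mem_univ i, h.symm⟩)
  have h1 : 1 ≤ p.support.card := Finset.card_pos.mpr (support_nonempty.mpr hp)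
  have prodsplit : ∀ (y z : F) (e : Fin 3 →₀ ℕ),
      ∏ i, (z / (y - a i)) ^ e i = (∏ i, ((y - a i)⁻¹) ^ e i) * z ^ ∑ i, e i := by
    intro y z e
    rw [← Finset.prod_pow_eq_pow_sum, ← Finset.prod_mul_distrib]
    refine Finset.prod_congr rfl fun i _ => ?_
    rw [div_eq_mul_inv, mul_pow, mul_comm]
  have hUne : ∀ (y : F), (∀ i, y ≠ a i) → ∀ (e : Fin 3 →₀ ℕ),
      (∏ i, ((y - a i)⁻¹) ^ e i) ≠ 0 := by
    intro y hy e
    exact Finset.prod_ne_zero_iff.mpr fun i _ =>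
      pow_ne_zero _ (inv_ne_zero (sub_ne_zero.mpr (hy i)))
  have hcases : p.support.card = 1 ∨ p.support.card = 2 := by omega
  rcases hcases with h | h
  · -- one monomial
    obtain ⟨m, hm⟩ := Finset.card_eq_one.mp h
    have hcmem : m ∈ p.support := hm ▸ Finset.mem_singleton_self m
    have hc : coeff m p ≠ 0 := mem_support_iff.mp hcmem
    have hps : p = monomial m (coeff m p) := by
      conv_lhs => rw [p.as_sum, hm, Finset.sum_singleton]
    have hv := hvan y0 1 hy0'
    rw [hps, evalMon] at hv
    rcases mul_eq_zero.mp hv with h' | h'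
    · exact hc h'
    · obtain ⟨i, -, hi⟩ := Finset.prod_eq_zero_iff.mp h'
      exact (pow_ne_zero _ (div_ne_zero one_ne_zero (sub_ne_zero.mpr (hy0' i)))) hi
  · -- two monomials
    obtain ⟨m, n, hmn, hsupp⟩ := Finset.card_eq_two.mp h
    set c := coeff m p with hc'
    set d := coeff n p with hd'
    have hc : c ≠ 0 := mem_support_iff.mp (by rw [hsupp]; simp)
    have hd : d ≠ 0 := mem_support_iff.mp (by rw [hsupp]; simp)
    have hps : p = monomial m c + monomial n d := by
      conv_lhs => rw [p.as_sum, hsupp]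
      rw [Finset.sum_pair hmn]
    set M := ∑ i, m i with hM
    set N := ∑ i, n i with hN
    have key : ∀ y : F, (∀ i, y ≠ a i) → ∀ z : F,
        (c * ∏ i, ((y - a i)⁻¹) ^ m i) * z ^ M
          + (d * ∏ i, ((y - a i)⁻¹) ^ n i) * z ^ N = 0 := by
      intro y hy z
      have hv := hvan y z hy
      rw [hps, map_add, evalMon, evalMon, prodsplit, prodsplit] at hv
      rw [mul_assoc, mul_assoc]
      exact hv
    by_cases hMN : M = N
    · -- equal total degrees: use the polynomial in y
      set P : Polynomial F :=
          Polynomial.C c * ∏ i, (Polynomial.X - Polynomial.C (a i)) ^ n i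
          + Polynomial.C d * ∏ i, (Polynomial.X - Polynomial.C (a i)) ^ m i with hP
      have hProot : ∀ y : F, (∀ i, y ≠ a i) → Polynomial.eval y P = 0 := by
        intro y hy
        have h0 := key y hy 1
        simp only [one_pow, mul_one] at h0
        have hW : ∀ e e' : Fin 3 →₀ ℕ,
            (∏ i, ((y - a i)⁻¹) ^ e i) * (∏ i, (y - a i) ^ (e i + e' i))
              = ∏ i, (y - a i) ^ e' i := by
          intro e e'
          rw [← Finset.prod_mul_distrib]
          refine Finset.prod_congr rfl fun i _ => ?_
          have ht : (y - a i) ≠ 0 := sub_ne_zero.mpr (hy i)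
          rw [pow_add, ← mul_assoc, ← mul_pow, inv_mul_cancel₀ ht, one_pow, one_mul]
        have e1 : c * ((∏ i, ((y - a i)⁻¹) ^ m i) * ∏ i, (y - a i) ^ (m i + n i))
            + d * ((∏ i, ((y - a i)⁻¹) ^ n i) * ∏ i, (y - a i) ^ (n i + m i)) = 0 := by
          have hcom : (∏ i, (y - a i) ^ (n i + m i)) = ∏ i, (y - a i) ^ (m i + n i) := by
            refine Finset.prod_congr rfl fun i _ => ?_
            rw [add_comm]
          rw [hcom]
          linear_combination (∏ i, (y - a i) ^ (m i + n i)) * h0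
        rw [hW m n, hW n m] at e1
        simp only [hP, Polynomial.eval_add, Polynomial.eval_mul, Polynomial.eval_C,
          Polynomial.eval_prod, Polynomial.eval_pow, Polynomial.eval_sub, Polynomial.eval_X]
        exact e1
      have hPzero : P = 0 := by
        apply Polynomial.eq_zero_of_infinite_isRoot
        apply Set.Infinite.mono _ ((Set.finite_range a).infinite_compl)
        intro y hy
        exact hProot y (fun i hi => hy ⟨i, hi.symm⟩)
      -- find i0 with m i0 < n i0
      have hex : ∃ i, m i < n i := by
        by_contra hno
        push_neg at hno
        have hsum : ∑ i, n i = ∑ i, m i := hMN.symm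
        have hall : ∀ i ∈ Finset.univ, n i = m i :=
          (Finset.sum_eq_sum_iff_of_le (fun i _ => hno i)).mp hsum
        exact hmn (Finsupp.ext fun i => (hall i (Finset.mem_univ i)).symm)
      obtain ⟨i0, hi0⟩ := hex
      set k := n i0 - m i0 with hk'
      have hkpos : 0 < k := by omega
      have hn0 : n i0 = m i0 + k := by omega
      set A' : Polynomial F := ∏ i ∈ Finset.univ.erase i0, (Polynomial.X - Polynomial.C (a i)) ^ n i with hA'
      set B' : Polynomial F := ∏ i ∈ Finset.univ.erase i0, (Polynomial.X - Polynomial.C (a i)) ^ m i with hB'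
      have hA : (∏ i, (Polynomial.X - Polynomial.C (a i)) ^ n i)
          = (Polynomial.X - Polynomial.C (a i0)) ^ n i0 * A' :=
        (Finset.mul_prod_erase _ _ (Finset.mem_univ i0)).symm
      have hB : (∏ i, (Polynomial.X - Polynomial.C (a i)) ^ m i)
          = (Polynomial.X - Polynomial.C (a i0)) ^ m i0 * B' :=
        (Finset.mul_prod_erase _ _ (Finset.mem_univ i0)).symm
      have hQ : Polynomial.C c * (Polynomial.X - Polynomial.C (a i0)) ^ k * A'
          + Polynomial.C d * B' = 0 := by
        have h2 : (Polynomial.X - Polynomial.C (a i0)) ^ m i0 *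
            (Polynomial.C c * (Polynomial.X - Polynomial.C (a i0)) ^ k * A'
              + Polynomial.C d * B')
            = (Polynomial.X - Polynomial.C (a i0)) ^ m i0 * 0 := by
          rw [mul_zero, ← hPzero, hP, hA, hB, hn0, pow_add]
          ring
        exact mul_left_cancel₀ (pow_ne_zero _ (Polynomial.X_sub_C_ne_zero (a i0))) h2
      have hev := congrArg (Polynomial.eval (a i0)) hQ
      simp only [Polynomial.eval_add, Polynomial.eval_mul, Polynomial.eval_C,
        Polynomial.eval_pow, Polynomial.eval_sub, Polynomial.eval_X, sub_self,
        zero_pow hkpos.ne', mul_zero, zero_mul, zero_add, Polynomial.eval_zero] at hev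
      rcases mul_eq_zero.mp hev with h' | h'
      · exact hd h'
      · rw [hB', Polynomial.eval_prod] at h'
        obtain ⟨j, hj, hj0⟩ := Finset.prod_eq_zero_iff.mp h'
        have hjne : j ≠ i0 := (Finset.mem_erase.mp hj).1
        simp only [Polynomial.eval_pow, Polynomial.eval_sub, Polynomial.eval_X,
          Polynomial.eval_C] at hj0
        have : a i0 - a j = 0 := by
          by_contra hne
          exact (pow_ne_zero _ hne) hj0
        exact hjne (ha (sub_eq_zero.mp this)).symm
    · -- distinct total degrees: polynomial in z at y0
      have hq : (Polynomial.C (c * ∏ i, ((y0 - a i)⁻¹) ^ m i) * Polynomial.X ^ M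
          + Polynomial.C (d * ∏ i, ((y0 - a i)⁻¹) ^ n i) * Polynomial.X ^ N)
          = (0 : Polynomial F) := by
        apply Polynomial.funext
        intro z
        simp only [Polynomial.eval_add, Polynomial.eval_mul, Polynomial.eval_C,
          Polynomial.eval_pow, Polynomial.eval_X, Polynomial.eval_zero]
        exact key y0 hy0' z
      have hcoe := congrArg (fun q => Polynomial.coeff q M) hq
      simp only [Polynomial.coeff_add, Polynomial.coeff_C_mul, Polynomial.coeff_X_pow,
        Polynomial.coeff_zero] at hcoe
      simp only [if_true, if_neg hMN, mul_one, mul_zero, add_zero] at hcoe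
      rcases mul_eq_zero.mp hcoe with h' | h'
      · exact hc h'
      · exact hUne y0 hy0' m h'
end

section
/- Let F be an infinite field, a_1, ..., a_n distinct elements of F, and let p ∈ F[x_1,...,x_n] be a nonzero multilinear polynomial that contains a monomial of degree 1 with nonzero coefficient (i.e., some coefficient of a single variable x_i is nonzero) and whose constant term may be arbitrary. Then there exist y, z ∈ F with y ∉ {a_1,...,a_n} such that p(z/(y-a_1), ..., z/(y-a_n)) ≠ 0. -/
open MvPolynomial

/-- A finitely supported function on `Fin n` with total sum `1` is `single i 1`. -/
lemma aux_sum_eq_one {n : ℕ} (m : Fin n →₀ ℕ) (hm : (m.sum fun _ k => k) = 1) :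
    ∃ i, m = Finsupp.single i 1 := by
  classical
  have hne : m.support.Nonempty := by
    rcases Finset.eq_empty_or_nonempty m.support with h | h
    · exfalso
      rw [Finsupp.sum, h, Finset.sum_empty] at hm
      exact one_ne_zero hm.symm
    · exact h
  obtain ⟨i, hi⟩ := hne
  refine ⟨i, ?_⟩
  have hmi1 : m i ≤ 1 := by
    rw [← hm, Finsupp.sum]
    exact Finset.single_le_sum (fun j _ => Nat.zero_le _) hi
  have hmi : m i = 1 := le_antisymm hmi1 (Nat.one_le_iff_ne_zero.2 (Finsupp.mem_support_iff.1 hi))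
  ext j
  rcases eq_or_ne j i with rfl | hj
  · simpa [hmi] using rfl
  · simp only [Finsupp.single_apply, if_neg (fun h : i = j => hj h.symm)]
    by_contra hmj
    have hjmem : j ∈ m.support := Finsupp.mem_support_iff.2 hmj
    have hsub : ({i, j} : Finset (Fin n)) ⊆ m.support := by
      intro x hx
      rcases Finset.mem_insert.1 hx with rfl | hx
      · exact hi
      · rw [Finset.mem_singleton.1 hx]; exact hjmem
    have h2 : 2 ≤ (m.sum fun _ k => k) := by
      rw [Finsupp.sum]
      calc 2 ≤ m i + m j := by
              have : 1 ≤ m j := Nat.one_le_iff_ne_zero.2 hmj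
              omega
        _ = ∑ x ∈ ({i, j} : Finset (Fin n)), m x := by
              rw [Finset.sum_insert (by simpa [eq_comm] using hj), Finset.sum_singleton]
        _ ≤ ∑ x ∈ m.support, m x :=
              Finset.sum_le_sum_of_subset hsub
    omega

theorem stmt_16 (F : Type*) [Field F] [Infinite F] (n : ℕ) (a : Fin n → F)
    (ha : Function.Injective a) (p : MvPolynomial (Fin n) F)
    (hp : p ≠ 0) (hml : ∀ i, p.degreeOf i ≤ 1)
    (hlin : ∃ i, p.coeff (Finsupp.single i 1) ≠ 0) :
    ∃ y z : F, (∀ i, y ≠ a i) ∧ eval (fun i => z / (y - a i)) p ≠ 0 := by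
  classical
  obtain ⟨i0, hi0⟩ := hlin
  set c : Fin n → F := fun i => p.coeff (Finsupp.single i 1) with hc
  -- the numerator polynomial
  set N : Polynomial F :=
    ∑ i, Polynomial.C (c i) * ∏ j ∈ Finset.univ.erase i, (Polynomial.X - Polynomial.C (a j))
    with hN
  have hNeval : ∀ t : F, N.eval t = ∑ i, c i * ∏ j ∈ Finset.univ.erase i, (t - a j) := by
    intro t
    simp [hN, Polynomial.eval_finset_sum, Polynomial.eval_prod]
  have hNne : N ≠ 0 := by
    intro h
    have h0 : N.eval (a i0) = 0 := by rw [h]; simp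
    rw [hNeval] at h0
    have hterm : ∀ i ∈ Finset.univ, i ≠ i0 →
        c i * ∏ j ∈ Finset.univ.erase i, (a i0 - a j) = 0 := by
      intro i _ hii0
      have : (∏ j ∈ Finset.univ.erase i, (a i0 - a j)) = 0 := by
        apply Finset.prod_eq_zero (Finset.mem_erase.2 ⟨(Ne.symm hii0), Finset.mem_univ i0⟩)
        simp
      rw [this, mul_zero]
    rw [Finset.sum_eq_single_of_mem i0 (Finset.mem_univ i0) hterm] at h0
    have hprod : (∏ j ∈ Finset.univ.erase i0, (a i0 - a j)) ≠ 0 := by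
      apply Finset.prod_ne_zero_iff.2
      intro j hj
      have : j ≠ i0 := (Finset.mem_erase.1 hj).1
      exact sub_ne_zero.2 fun h => this (ha h.symm)
    exact hi0 (by simpa [hprod] using (mul_eq_zero.1 h0).resolve_right hprod)
  -- choose y avoiding roots of N and the aᵢ
  obtain ⟨y, hy⟩ := Infinite.exists_notMem_finset
    (N.roots.toFinset ∪ Finset.image a Finset.univ)
  have hya : ∀ i, y ≠ a i := by
    intro i h
    exact hy (Finset.mem_union_right _ (Finset.mem_image.2 ⟨i, Finset.mem_univ i, h.symm⟩))
  have hysub : ∀ i, y - a i ≠ 0 := fun i => sub_ne_zero.2 (hya i)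
  have hyN : N.eval y ≠ 0 := by
    intro h
    exact hy (Finset.mem_union_left _ (by
      simp [Multiset.mem_toFinset, Polynomial.mem_roots, hNne, Polynomial.IsRoot, h]))
  -- the key nonvanishing of the linear coefficient
  have hS : (∑ i, c i * (y - a i)⁻¹) ≠ 0 := by
    intro h
    apply hyN
    have key : (∑ i, c i * (y - a i)⁻¹) * ∏ j, (y - a j) = N.eval y := by
      rw [Finset.sum_mul, hNeval]
      refine Finset.sum_congr rfl fun i _ => ?_
      rw [mul_assoc]
      congr 1
      rw [← Finset.mul_prod_erase Finset.univ _ (Finset.mem_univ i),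
        ← mul_assoc, inv_mul_cancel₀ (hysub i), one_mul]
    rw [← key, h, zero_mul]
  -- the one-variable polynomial
  set f : Fin n → Polynomial F := fun i => Polynomial.C ((y - a i)⁻¹) * Polynomial.X with hf
  set q : Polynomial F := MvPolynomial.aeval f p with hq
  -- compute the coefficient of X in q
  have hcoeff : q.coeff 1 = ∑ i, c i * (y - a i)⁻¹ := by
    have hqsum : q = ∑ m ∈ p.support,
        Polynomial.C (p.coeff m * m.prod fun i k => ((y - a i)⁻¹) ^ k) *
          Polynomial.X ^ (m.sum fun _ k => k) := by
      conv_lhs => rw [hq, p.as_sum, map_sum]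
      refine Finset.sum_congr rfl fun m _ => ?_
      rw [aeval_monomial]
      have : (m.prod fun i k => f i ^ k) =
          Polynomial.C (m.prod fun i k => ((y - a i)⁻¹) ^ k) *
            Polynomial.X ^ (m.sum fun _ k => k) := by
        rw [Finsupp.prod, Finsupp.prod, Finsupp.sum]
        rw [show (∏ i ∈ m.support, f i ^ m i) =
            ∏ i ∈ m.support, (Polynomial.C ((y - a i)⁻¹ ^ m i) * Polynomial.X ^ m i) from
          Finset.prod_congr rfl fun i _ => by rw [hf, mul_pow, Polynomial.C_pow]]
        rw [Finset.prod_mul_distrib, Finset.prod_pow_eq_pow_sum]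
        congr 1
        exact (map_prod (Polynomial.C : F →+* Polynomial F) _ m.support).symm
      rw [this, ← mul_assoc]
      congr 1
      rw [Polynomial.algebraMap_eq, ← Polynomial.C_mul]
    have hg : q.coeff 1 = ∑ m ∈ p.support,
        (if (m.sum fun _ k => k) = 1 then
          p.coeff m * m.prod fun i k => ((y - a i)⁻¹) ^ k else 0) := by
      rw [hqsum, Polynomial.finset_sum_coeff]
      refine Finset.sum_congr rfl fun m _ => ?_
      rw [Polynomial.coeff_C_mul, Polynomial.coeff_X_pow]
      rcases eq_or_ne (m.sum fun _ k => k) 1 with h | h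
      · rw [if_pos h.symm, if_pos h, mul_one]
      · rw [if_neg fun hh => h hh.symm, if_neg h, mul_zero]
    rw [hg]
    -- reindex over singles
    set g : (Fin n →₀ ℕ) → F := fun m =>
      if (m.sum fun _ k => k) = 1 then
        p.coeff m * m.prod fun i k => ((y - a i)⁻¹) ^ k else 0 with hgdef
    have hsingle : ∀ i : Fin n, g (Finsupp.single i 1) = c i * (y - a i)⁻¹ := by
      intro i
      have h1 : ((Finsupp.single i 1 : Fin n →₀ ℕ).sum fun _ k => k) = 1 :=
        Finsupp.sum_single_index rfl
      have h2 : ((Finsupp.single i 1 : Fin n →₀ ℕ).prod fun j k => ((y - a j)⁻¹) ^ k)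
          = (y - a i)⁻¹ :=
        (Finsupp.prod_single_index (h := fun j k => (y - a j)⁻¹ ^ k) (pow_zero _)).trans (pow_one _)
      simp [hgdef, h1, h2, hc]
    have hinj : Function.Injective (fun i : Fin n => Finsupp.single i (1 : ℕ)) := by
      intro i j h
      exact Finsupp.single_left_injective one_ne_zero h
    set T : Finset (Fin n →₀ ℕ) := Finset.image (fun i => Finsupp.single i (1 : ℕ))
      Finset.univ with hT
    have h1 : ∑ m ∈ p.support, g m = ∑ m ∈ p.support ∪ T, g m := by
      apply Finset.sum_subset Finset.subset_union_left
      intro m _ hm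
      have : p.coeff m = 0 := by simpa using (notMem_support_iff.1 hm)
      simp [hgdef, this]
    have h2 : ∑ m ∈ T, g m = ∑ m ∈ p.support ∪ T, g m := by
      apply Finset.sum_subset Finset.subset_union_right
      intro m _ hm
      have : (m.sum fun _ k => k) ≠ 1 := by
        intro h
        obtain ⟨i, rfl⟩ := aux_sum_eq_one m h
        exact hm (Finset.mem_image.2 ⟨i, Finset.mem_univ i, rfl⟩)
      simp [hgdef, this]
    have h3 : ∑ m ∈ T, g m = ∑ i, c i * (y - a i)⁻¹ := by
      rw [hT, Finset.sum_image (fun i _ j _ h => hinj h)]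
      exact Finset.sum_congr rfl fun i _ => hsingle i
    rw [h1, ← h2, h3]
  have hqne : q ≠ 0 := by
    intro h
    rw [h, Polynomial.coeff_zero] at hcoeff
    exact hS hcoeff.symm
  obtain ⟨z, hz⟩ : ∃ z, q.eval z ≠ 0 := by
    by_contra h
    push_neg at h
    exact hqne (Polynomial.zero_of_eval_zero q h)
  refine ⟨y, z, hya, ?_⟩
  have heq : eval (fun i => z / (y - a i)) p = q.eval z := by
    have h1 : q.eval z = MvPolynomial.aeval (fun i => Polynomial.aeval z (f i)) p := by
      rw [hq, ← Polynomial.coe_aeval_eq_eval z]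
      exact MvPolynomial.comp_aeval_apply (f := f) (Polynomial.aeval z) p
    have h2 : (fun i => (Polynomial.aeval z) (f i)) = fun i => z / (y - a i) := by
      funext i
      rw [hf]
      rw [map_mul, Polynomial.aeval_X, Polynomial.aeval_C, Algebra.algebraMap_self_apply,
        div_eq_mul_inv, mul_comm]
    rw [h1, h2]
    rfl
  rw [heq]
  exact hz
end

section
/- Let F be a field and a_1, ..., a_n distinct elements of F with n = k + l + 2. Then the (k+l+2)×(k+l+2) matrix whose i-th row is (a_i^{k+l+1}, a_i^{k+l}, ..., a_i, 1) has nonzero determinant; consequently, the polynomial EVC_{k,l}(x_1,...,x_n), defined as the determinant of the matrix with i-th row (a_i^l x_i, ..., a_i x_i, x_i, a_i^k, ..., a_i, 1), is a nonzero polynomial: its coefficient on the monomial x_1 x_2 ⋯ x_{l+1} equals ± the product of two Vandermonde determinants (on a_1,...,a_{l+1} and on a_{l+2},...,a_{k+l+2}) and is nonzero. -/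
open MvPolynomial

section Aux

variable {F : Type*} [Field F]

lemma aux_indicator {N : ℕ} (T : Finset (Fin N)) (x : Fin N) :
    (∑ i ∈ T, Finsupp.single i 1) x = if x ∈ T then 1 else 0 := by
  classical
  rw [Finsupp.finset_sum_apply]
  simp [Finsupp.single_apply]

lemma aux_prod_X {R : Type*} [CommSemiring R] {σ ι : Type*} [DecidableEq σ]
    (S : Finset ι) (f : ι → σ) :
    (∏ j ∈ S, (X (f j) : MvPolynomial σ R))
      = monomial (∑ j ∈ S, Finsupp.single (f j) 1) 1 := by
  classical
  induction S using Finset.induction_on with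
  | empty => simp [monomial_zero']
  | insert _ _ h ih =>
      rw [Finset.prod_insert h, Finset.sum_insert h, ih, X, monomial_mul, one_mul]

lemma aux_prod_pairs {M : Type*} [CommMonoid M] {N : ℕ} (f : Fin N → Fin N → M) :
    (∏ p ∈ Finset.univ.filter (fun p : Fin N × Fin N => p.1 < p.2), f p.1 p.2)
      = ∏ i, ∏ j ∈ Finset.Ioi i, f i j := by
  rw [Finset.prod_filter, ← Finset.univ_product_univ, Finset.prod_product]
  refine Finset.prod_congr rfl fun i _ => ?_
  rw [← Finset.prod_filter]
  congr 1
  ext j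
  simp

lemma aux_rev_det {R : Type*} [CommRing R] (n : ℕ) (b : Fin n → R) :
    (Matrix.of fun i j : Fin n => b i ^ (n - 1 - (j : ℕ))).det
      = ((Equiv.Perm.sign (Fin.revPerm : Equiv.Perm (Fin n)) : ℤ) : R)
          * (Matrix.vandermonde b).det := by
  rw [← Matrix.det_permute' Fin.revPerm (Matrix.vandermonde b)]
  congr 1
  ext i j
  simp only [Matrix.of_apply, Matrix.submatrix_apply, id_eq, Matrix.vandermonde_apply,
    Fin.revPerm_apply, Fin.val_rev]
  congr 1
  omega

end Aux

/-- the polynomial matrix -/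
noncomputable def egM (F : Type*) [Field F] (k l : ℕ) (a : Fin (k + l + 2) → F) :
    Matrix (Fin (k + l + 2)) (Fin (k + l + 2)) (MvPolynomial (Fin (k + l + 2)) F) :=
  Matrix.of fun i j : Fin (k + l + 2) =>
    if (j : ℕ) ≤ l then C (a i ^ (l - (j : ℕ))) * X i
    else (C (a i ^ (k + l + 1 - (j : ℕ))) : MvPolynomial (Fin (k + l + 2)) F)

/-- the monomial -/
noncomputable def egm (k l : ℕ) : Fin (k + l + 2) →₀ ℕ :=
  ∑ i ∈ Finset.univ.filter (fun i : Fin (k + l + 2) => (i : ℕ) < l + 1),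
    Finsupp.single i 1

/-- the block-diagonal constant matrix -/
def egN (F : Type*) [Field F] (k l : ℕ) (a : Fin (k + l + 2) → F) :
    Matrix (Fin (k + l + 2)) (Fin (k + l + 2)) F :=
  Matrix.of fun i j : Fin (k + l + 2) =>
    if (j : ℕ) ≤ l then (if (i : ℕ) ≤ l then a i ^ (l - (j : ℕ)) else 0)
    else (if (i : ℕ) ≤ l then 0 else a i ^ (k + l + 1 - (j : ℕ)))

def egS (k l : ℕ) : Finset (Fin (k + l + 2)) :=
  Finset.univ.filter (fun i : Fin (k + l + 2) => (i : ℕ) < l + 1)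

lemma aux_coeff_det (F : Type*) [Field F] (k l : ℕ) (a : Fin (k + l + 2) → F) :
    coeff (egm k l) (egM F k l a).det = (egN F k l a).det := by
  classical
  rw [Matrix.det_apply', Matrix.det_apply', coeff_sum]
  refine Finset.sum_congr rfl fun σ _ => ?_
  rw [← zsmul_eq_mul, coeff_smul, zsmul_eq_mul]
  congr 1
  -- key per-permutation identity
  set S := egS k l with hS
  have hmemS : ∀ j : Fin (k + l + 2), j ∈ S ↔ (j : ℕ) < l + 1 := by
    intro j; simp [hS, egS]
  have h1 : ∏ j ∈ S, (egM F k l a) (σ j) j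
      = ∏ j ∈ S, (C (a (σ j) ^ (l - (j : ℕ))) * X (σ j)) := by
    refine Finset.prod_congr rfl fun j hj => ?_
    have hjl : (j : ℕ) ≤ l := Nat.lt_succ_iff.mp ((hmemS j).mp hj)
    simp [egM, hjl]
  have h2 : ∏ j ∈ Finset.univ.filter (fun j : Fin (k + l + 2) => ¬ (j : ℕ) < l + 1),
        (egM F k l a) (σ j) j
      = ∏ j ∈ Finset.univ.filter (fun j : Fin (k + l + 2) => ¬ (j : ℕ) < l + 1),
        (C (a (σ j) ^ (k + l + 1 - (j : ℕ))) : MvPolynomial (Fin (k + l + 2)) F) := by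
    refine Finset.prod_congr rfl fun j hj => ?_
    have hjl : ¬ (j : ℕ) ≤ l := by
      have := (Finset.mem_filter.mp hj).2
      omega
    simp [egM, hjl]
  have hprodM : (∏ j, (egM F k l a) (σ j) j)
      = monomial (∑ j ∈ S, Finsupp.single (σ j) 1)
          ((∏ j ∈ S, a (σ j) ^ (l - (j : ℕ))) *
            ∏ j ∈ Finset.univ.filter (fun j : Fin (k + l + 2) => ¬ (j : ℕ) < l + 1),
              a (σ j) ^ (k + l + 1 - (j : ℕ))) := by
    rw [← Finset.prod_filter_mul_prod_filter_not Finset.univ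
      (fun j : Fin (k + l + 2) => (j : ℕ) < l + 1) (fun j => (egM F k l a) (σ j) j)]
    rw [show Finset.univ.filter (fun j : Fin (k + l + 2) => (j : ℕ) < l + 1) = S from rfl]
    rw [h1, h2, Finset.prod_mul_distrib, ← map_prod, aux_prod_X, ← map_prod,
      C_apply, C_apply, monomial_mul, monomial_mul]
    congr 1
    · simp
    · ring
  rw [hprodM, coeff_monomial]
  by_cases himg : S.image σ = S
  · have hreindex : (∑ j ∈ S, Finsupp.single (σ j) 1)
        = ∑ i ∈ S.image σ, Finsupp.single i 1 :=
      (Finset.sum_image (f := fun i : Fin (k + l + 2) => Finsupp.single i (1 : ℕ))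
        (g := ⇑σ) (s := S) (fun x _ y _ h => σ.injective h)).symm
    have hd : (∑ j ∈ S, Finsupp.single (σ j) 1) = egm k l := by
      rw [hreindex, himg]
      rfl
    rw [if_pos hd]
    have hmem : ∀ j, j ∈ S → σ j ∈ S := fun j hj =>
      himg ▸ Finset.mem_image_of_mem σ hj
    have hmem' : ∀ j, j ∉ S → σ j ∉ S := by
      intro j hj hσ
      rw [← himg] at hσ
      obtain ⟨j', hj', he⟩ := Finset.mem_image.mp hσ
      exact hj (σ.injective he ▸ hj')
    rw [← Finset.prod_filter_mul_prod_filter_not Finset.univ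
      (fun j : Fin (k + l + 2) => (j : ℕ) < l + 1) (fun j => (egN F k l a) (σ j) j)]
    rw [show Finset.univ.filter (fun j : Fin (k + l + 2) => (j : ℕ) < l + 1) = S from rfl]
    congr 1
    · refine Finset.prod_congr rfl fun j hj => ?_
      have h1 : (j : ℕ) ≤ l := Nat.lt_succ_iff.mp ((hmemS j).mp hj)
      have h2 : (σ j : ℕ) ≤ l := Nat.lt_succ_iff.mp ((hmemS (σ j)).mp (hmem j hj))
      simp [egN, h1, h2]
    · refine Finset.prod_congr rfl fun j hj => ?_
      have h1 : ¬ (j : ℕ) ≤ l := by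
        have := (Finset.mem_filter.mp hj).2; omega
      have h2 : ¬ (σ j : ℕ) ≤ l := by
        have hj' : j ∉ S := by
          intro hc; exact ((Finset.mem_filter.mp hj).2) ((hmemS j).mp hc)
        have := hmem' j hj'
        rw [hmemS] at this; omega
      simp [egN, h1, h2]
  · obtain ⟨j0, hj0S, hj0⟩ : ∃ j0 ∈ S, σ j0 ∉ S := by
      by_contra h
      push_neg at h
      refine himg (Finset.eq_of_subset_of_card_le ?_ ?_)
      · intro x hx
        obtain ⟨j, hj, rfl⟩ := Finset.mem_image.mp hx
        exact h j hj
      · rw [Finset.card_image_of_injective _ σ.injective]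
    have hd : (∑ j ∈ S, Finsupp.single (σ j) 1) ≠ egm k l := by
      intro h
      have hreindex : (∑ j ∈ S, Finsupp.single (σ j) 1)
          = ∑ i ∈ S.image σ, Finsupp.single i 1 :=
        (Finset.sum_image (f := fun i : Fin (k + l + 2) => Finsupp.single i (1 : ℕ))
        (g := ⇑σ) (s := S) (fun x _ y _ h => σ.injective h)).symm
      have h1 : (∑ j ∈ S, Finsupp.single (σ j) 1) (σ j0) = 1 := by
        rw [hreindex, aux_indicator, if_pos (Finset.mem_image_of_mem σ hj0S)]
      have h2 : (egm k l) (σ j0) = 0 := by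
        rw [egm, aux_indicator, if_neg]
        intro hc
        exact hj0 ((hmemS (σ j0)).mpr (by simpa using (Finset.mem_filter.mp hc).2))
      rw [h] at h1
      rw [h2] at h1
      exact one_ne_zero h1.symm
    rw [if_neg hd]
    refine (Finset.prod_eq_zero (Finset.mem_univ j0) ?_).symm
    have h1 : (j0 : ℕ) ≤ l := Nat.lt_succ_iff.mp ((hmemS j0).mp hj0S)
    have h2 : ¬ (σ j0 : ℕ) ≤ l := by
      intro hc; exact hj0 ((hmemS (σ j0)).mpr (Nat.lt_succ_iff.mpr hc))
    simp [egN, h1, h2]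

def egEquiv (k l : ℕ) : Fin (l + 1) ⊕ Fin (k + 1) ≃ Fin (k + l + 2) :=
  finSumFinEquiv.trans (finCongr (by omega))

lemma egEquiv_inl (k l : ℕ) (i : Fin (l + 1)) :
    ((egEquiv k l (Sum.inl i) : Fin (k + l + 2)) : ℕ) = (i : ℕ) := by
  simp [egEquiv]

lemma egEquiv_inr (k l : ℕ) (i : Fin (k + 1)) :
    ((egEquiv k l (Sum.inr i) : Fin (k + l + 2)) : ℕ) = l + 1 + (i : ℕ) := by
  simp [egEquiv]

lemma aux_detN (F : Type*) [Field F] (k l : ℕ) (a : Fin (k + l + 2) → F) :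
    (egN F k l a).det =
      (Matrix.of fun i j : Fin (l + 1) =>
        a (egEquiv k l (Sum.inl i)) ^ (l - (j : ℕ))).det *
      (Matrix.of fun i j : Fin (k + 1) =>
        a (egEquiv k l (Sum.inr i)) ^ (k - (j : ℕ))).det := by
  rw [← Matrix.det_submatrix_equiv_self (egEquiv k l) (egN F k l a)]
  rw [show (egN F k l a).submatrix (egEquiv k l) (egEquiv k l) =
      Matrix.fromBlocks
        (Matrix.of fun i j : Fin (l + 1) =>
          a (egEquiv k l (Sum.inl i)) ^ (l - (j : ℕ))) 0 0
        (Matrix.of fun i j : Fin (k + 1) =>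
          a (egEquiv k l (Sum.inr i)) ^ (k - (j : ℕ))) from ?_]
  · exact Matrix.det_fromBlocks_zero₂₁ _ _ _
  · ext i j
    rcases i with i | i <;> rcases j with j | j <;>
      simp only [Matrix.submatrix_apply, Matrix.fromBlocks, Matrix.of_apply,
        Sum.elim_inl, Sum.elim_inr, Matrix.zero_apply, egN, egEquiv_inl, egEquiv_inr]
    · rw [if_pos (by omega : (j : ℕ) ≤ l), if_pos (by omega : (i : ℕ) ≤ l)]
    · rw [if_neg (by omega : ¬ l + 1 + (j : ℕ) ≤ l), if_pos (by omega : (i : ℕ) ≤ l)]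
    · rw [if_pos (by omega : (j : ℕ) ≤ l), if_neg (by omega : ¬ l + 1 + (i : ℕ) ≤ l)]
    · rw [if_neg (by omega : ¬ l + 1 + (j : ℕ) ≤ l),
        if_neg (by omega : ¬ l + 1 + (i : ℕ) ≤ l)]
      congr 1
      omega

lemma aux_v1 (F : Type*) [Field F] (k l : ℕ) (a : Fin (k + l + 2) → F) :
    (∏ p ∈ Finset.univ.filter
        (fun p : Fin (k + l + 2) × Fin (k + l + 2) =>
          (p.1 : ℕ) < (p.2 : ℕ) ∧ (p.2 : ℕ) < l + 1), (a p.2 - a p.1))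
      = ∏ i : Fin (l + 1), ∏ j ∈ Finset.Ioi i,
          (a (egEquiv k l (Sum.inl j)) - a (egEquiv k l (Sum.inl i))) := by
  rw [← aux_prod_pairs
    (fun i j : Fin (l + 1) => a (egEquiv k l (Sum.inl j)) - a (egEquiv k l (Sum.inl i)))]
  refine (Finset.prod_bij
    (fun (p : Fin (l + 1) × Fin (l + 1)) _ =>
      ((egEquiv k l (Sum.inl p.1)), (egEquiv k l (Sum.inl p.2)))) ?_ ?_ ?_ ?_).symm
  · intro p hp
    have hp' := (Finset.mem_filter.mp hp).2
    rw [Fin.lt_def] at hp'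
    simp only [Finset.mem_filter, Finset.mem_univ, true_and, egEquiv_inl]
    exact ⟨hp', p.2.isLt⟩
  · intro p₁ h₁ p₂ h₂ h
    have e1 := congrArg (fun q : Fin (k + l + 2) × Fin (k + l + 2) => (q.1 : ℕ)) h
    have e2 := congrArg (fun q : Fin (k + l + 2) × Fin (k + l + 2) => (q.2 : ℕ)) h
    simp only [egEquiv_inl] at e1 e2
    exact Prod.ext (Fin.ext e1) (Fin.ext e2)
  · intro b hb
    have hb' := (Finset.mem_filter.mp hb).2
    refine ⟨(⟨(b.1 : ℕ), by omega⟩, ⟨(b.2 : ℕ), by omega⟩), ?_, ?_⟩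
    · simp only [Finset.mem_filter, Finset.mem_univ, true_and, Fin.lt_def]
      exact hb'.1
    · refine Prod.ext (Fin.ext ?_) (Fin.ext ?_) <;> rw [egEquiv_inl]
  · intro p hp
    rfl

lemma aux_v2 (F : Type*) [Field F] (k l : ℕ) (a : Fin (k + l + 2) → F) :
    (∏ p ∈ Finset.univ.filter
        (fun p : Fin (k + l + 2) × Fin (k + l + 2) =>
          l + 1 ≤ (p.1 : ℕ) ∧ (p.1 : ℕ) < (p.2 : ℕ)), (a p.2 - a p.1))
      = ∏ i : Fin (k + 1), ∏ j ∈ Finset.Ioi i,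
          (a (egEquiv k l (Sum.inr j)) - a (egEquiv k l (Sum.inr i))) := by
  rw [← aux_prod_pairs
    (fun i j : Fin (k + 1) => a (egEquiv k l (Sum.inr j)) - a (egEquiv k l (Sum.inr i)))]
  refine (Finset.prod_bij
    (fun (p : Fin (k + 1) × Fin (k + 1)) _ =>
      ((egEquiv k l (Sum.inr p.1)), (egEquiv k l (Sum.inr p.2)))) ?_ ?_ ?_ ?_).symm
  · intro p hp
    have hp' := (Finset.mem_filter.mp hp).2
    rw [Fin.lt_def] at hp'
    simp only [Finset.mem_filter, Finset.mem_univ, true_and, egEquiv_inr]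
    omega
  · intro p₁ h₁ p₂ h₂ h
    have e1 := congrArg (fun q : Fin (k + l + 2) × Fin (k + l + 2) => (q.1 : ℕ)) h
    have e2 := congrArg (fun q : Fin (k + l + 2) × Fin (k + l + 2) => (q.2 : ℕ)) h
    simp only [egEquiv_inr] at e1 e2
    exact Prod.ext (Fin.ext (by omega)) (Fin.ext (by omega))
  · intro b hb
    have hb' := (Finset.mem_filter.mp hb).2
    have h1 := b.1.isLt
    have h2 := b.2.isLt
    refine ⟨(⟨(b.1 : ℕ) - (l + 1), by omega⟩, ⟨(b.2 : ℕ) - (l + 1), by omega⟩), ?_, ?_⟩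
    · simp only [Finset.mem_filter, Finset.mem_univ, true_and, Fin.lt_def]
      omega
    · refine Prod.ext (Fin.ext ?_) (Fin.ext ?_) <;> · dsimp only; rw [egEquiv_inr]; simp only [Fin.val_mk]; omega
  · intro p hp
    rfl

lemma aux_v_ne {F : Type*} [Field F] {N : ℕ} (a : Fin N → F) (ha : Function.Injective a)
    (Q : Fin N × Fin N → Prop) [DecidablePred Q]
    (hQ : ∀ p, Q p → (p.1 : ℕ) < (p.2 : ℕ)) :
    (∏ p ∈ Finset.univ.filter Q, (a p.2 - a p.1)) ≠ 0 := by
  rw [Finset.prod_ne_zero_iff]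
  intro p hp
  refine sub_ne_zero.mpr fun h => ?_
  have h1 := hQ p (Finset.mem_filter.mp hp).2
  have h2 := congrArg Fin.val (ha h)
  omega

lemma aux2 (F : Type*) [Field F] (k l : ℕ) (a : Fin (k + l + 2) → F)
    (ha : Function.Injective a) :
    (egM F k l a).det ≠ 0 ∧
    (coeff (egm k l) (egM F k l a).det =
        (∏ p ∈ Finset.univ.filter
          (fun p : Fin (k + l + 2) × Fin (k + l + 2) =>
            (p.1 : ℕ) < (p.2 : ℕ) ∧ (p.2 : ℕ) < l + 1), (a p.2 - a p.1)) *
        (∏ p ∈ Finset.univ.filter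
          (fun p : Fin (k + l + 2) × Fin (k + l + 2) =>
            l + 1 ≤ (p.1 : ℕ) ∧ (p.1 : ℕ) < (p.2 : ℕ)), (a p.2 - a p.1)) ∨
      coeff (egm k l) (egM F k l a).det =
        -((∏ p ∈ Finset.univ.filter
          (fun p : Fin (k + l + 2) × Fin (k + l + 2) =>
            (p.1 : ℕ) < (p.2 : ℕ) ∧ (p.2 : ℕ) < l + 1), (a p.2 - a p.1)) *
        (∏ p ∈ Finset.univ.filter
          (fun p : Fin (k + l + 2) × Fin (k + l + 2) =>
            l + 1 ≤ (p.1 : ℕ) ∧ (p.1 : ℕ) < (p.2 : ℕ)), (a p.2 - a p.1)))) ∧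
    coeff (egm k l) (egM F k l a).det ≠ 0 := by
  classical
  set V1 : F := ∏ p ∈ Finset.univ.filter
      (fun p : Fin (k + l + 2) × Fin (k + l + 2) =>
        (p.1 : ℕ) < (p.2 : ℕ) ∧ (p.2 : ℕ) < l + 1), (a p.2 - a p.1) with hV1
  set V2 : F := ∏ p ∈ Finset.univ.filter
      (fun p : Fin (k + l + 2) × Fin (k + l + 2) =>
        l + 1 ≤ (p.1 : ℕ) ∧ (p.1 : ℕ) < (p.2 : ℕ)), (a p.2 - a p.1) with hV2
  have hV1ne : V1 ≠ 0 := aux_v_ne a ha _ (fun p hp => hp.1)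
  have hV2ne : V2 ≠ 0 := aux_v_ne a ha _ (fun p hp => hp.2)
  have hδ1 : (Matrix.of fun i j : Fin (l + 1) =>
        a (egEquiv k l (Sum.inl i)) ^ (l - (j : ℕ))).det
      = ((Equiv.Perm.sign (Fin.revPerm : Equiv.Perm (Fin (l + 1))) : ℤ) : F)
        * (Matrix.vandermonde fun i => a (egEquiv k l (Sum.inl i))).det :=
    aux_rev_det (l + 1) _
  have hδ2 : (Matrix.of fun i j : Fin (k + 1) =>
        a (egEquiv k l (Sum.inr i)) ^ (k - (j : ℕ))).det
      = ((Equiv.Perm.sign (Fin.revPerm : Equiv.Perm (Fin (k + 1))) : ℤ) : F)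
        * (Matrix.vandermonde fun i => a (egEquiv k l (Sum.inr i))).det :=
    aux_rev_det (k + 1) _
  have hc : coeff (egm k l) (egM F k l a).det
      = ((Equiv.Perm.sign (Fin.revPerm : Equiv.Perm (Fin (l + 1))) : ℤ) : F)
        * ((Equiv.Perm.sign (Fin.revPerm : Equiv.Perm (Fin (k + 1))) : ℤ) : F)
        * (V1 * V2) := by
    rw [aux_coeff_det, aux_detN, hδ1, hδ2, Matrix.det_vandermonde, Matrix.det_vandermonde,
      hV1, hV2, aux_v1 F k l a, aux_v2 F k l a]
    ring
  have hsigns : (((Equiv.Perm.sign (Fin.revPerm : Equiv.Perm (Fin (l + 1))) : ℤ) : F)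
        * ((Equiv.Perm.sign (Fin.revPerm : Equiv.Perm (Fin (k + 1))) : ℤ) : F) = 1)
      ∨ (((Equiv.Perm.sign (Fin.revPerm : Equiv.Perm (Fin (l + 1))) : ℤ) : F)
        * ((Equiv.Perm.sign (Fin.revPerm : Equiv.Perm (Fin (k + 1))) : ℤ) : F) = -1) := by
    rcases Int.units_eq_one_or (Equiv.Perm.sign (Fin.revPerm : Equiv.Perm (Fin (l + 1)))) with h1 | h1 <;>
      rcases Int.units_eq_one_or (Equiv.Perm.sign (Fin.revPerm : Equiv.Perm (Fin (k + 1)))) with h2 | h2 <;>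
        simp [h1, h2]
  have hcoeff : coeff (egm k l) (egM F k l a).det = V1 * V2 ∨
      coeff (egm k l) (egM F k l a).det = -(V1 * V2) := by
    rcases hsigns with h | h
    · left; rw [hc, h, one_mul]
    · right; rw [hc, h]; ring
  have hcne : coeff (egm k l) (egM F k l a).det ≠ 0 := by
    rcases hcoeff with h | h <;> rw [h]
    · exact mul_ne_zero hV1ne hV2ne
    · exact neg_ne_zero.mpr (mul_ne_zero hV1ne hV2ne)
  exact ⟨fun h => hcne (by rw [h, coeff_zero]), hcoeff, hcne⟩

theorem stmt_18 (F : Type*) [Field F] (k l : ℕ) (a : Fin (k + l + 2) → F)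
    (ha : Function.Injective a) :
    (Matrix.of fun i j : Fin (k + l + 2) => a i ^ (k + l + 1 - (j : ℕ))).det ≠ 0 ∧
    (let P : MvPolynomial (Fin (k + l + 2)) F :=
        (Matrix.of fun i j : Fin (k + l + 2) =>
          if (j : ℕ) ≤ l then C (a i ^ (l - (j : ℕ))) * X i
          else (C (a i ^ (k + l + 1 - (j : ℕ))) : MvPolynomial (Fin (k + l + 2)) F)).det
     let m : Fin (k + l + 2) →₀ ℕ :=
        ∑ i ∈ Finset.univ.filter (fun i : Fin (k + l + 2) => (i : ℕ) < l + 1),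
          Finsupp.single i 1
     let v1 : F := ∏ p ∈ Finset.univ.filter
          (fun p : Fin (k + l + 2) × Fin (k + l + 2) =>
            (p.1 : ℕ) < (p.2 : ℕ) ∧ (p.2 : ℕ) < l + 1), (a p.2 - a p.1)
     let v2 : F := ∏ p ∈ Finset.univ.filter
          (fun p : Fin (k + l + 2) × Fin (k + l + 2) =>
            l + 1 ≤ (p.1 : ℕ) ∧ (p.1 : ℕ) < (p.2 : ℕ)), (a p.2 - a p.1)
     P ≠ 0 ∧ (P.coeff m = v1 * v2 ∨ P.coeff m = -(v1 * v2)) ∧ P.coeff m ≠ 0) := by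
  constructor
  · have hrw : (Matrix.of fun i j : Fin (k + l + 2) => a i ^ (k + l + 1 - (j : ℕ))).det
        = ((Equiv.Perm.sign (Fin.revPerm : Equiv.Perm (Fin (k + l + 2))) : ℤ) : F)
          * (Matrix.vandermonde a).det := aux_rev_det (k + l + 2) a
    rw [hrw]
    refine mul_ne_zero ?_ (Matrix.det_vandermonde_ne_zero_iff.mpr ha)
    rcases Int.units_eq_one_or
      (Equiv.Perm.sign (Fin.revPerm : Equiv.Perm (Fin (k + l + 2)))) with h | h <;> simp [h]
  · exact aux2 F k l a ha
end
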